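/- Let n ≥ 2 be an integer, h > 0, c ≥ 0, and let ā = (a¹¹, a¹²; a¹², a²²) be a constant symmetric 2×2 matrix with a¹¹ > 0, a²² > 0 and |a¹²| ≤ min{a¹¹, a²²}. Suppose λ¹, λ² lie in the interval ( |a¹¹ − a²²|/(a¹¹ + a²²), 1 − 2|a¹²|/(a¹¹ + a²²) ]. Define the matrix A indexed by the interior nodes (i,j), 1 ≤ i, j ≤ n−1, of an n×n uniform square grid of mesh size h, with entries A_{(i,j),(k,l)} given by the nine-point stencil: A_{(i,j),(i,j)} = (1+λ²) a¹¹ + (1+λ¹) a²² + c h²; A_{(i,j),(i±1,j)} = −(1/2)(λ² a¹¹ + λ¹ a²²) + (1/2)(a²² − a¹¹); A_{(i,j),(i,j±1)} = −(1/2)(λ² a¹¹ + λ¹ a²²) + (1/2)(a¹¹ − a²²); A_{(i,j),(i+1,j+1)} = A_{(i,j),(i−1,j−1)} = −(1/4)( (1−λ²) a¹¹ + (1−λ¹) a²² ) − (1/2) a¹²; A_{(i,j),(i+1,j−1)} = A_{(i,j),(i−1,j+1)} = −(1/4)( (1−λ²) a¹¹ + (1−λ¹) a²² ) + (1/2) a¹²;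 and A_{(i,j),(k,l)} = 0 whenever max{|i−k|, |j−l|} ≥ 2 (entries referring to nodes outside the index range are simply omitted). Then A is invertible and every entry of A⁻¹ is nonnegative. -/

import Mathlib

open Matrix

noncomputable section

/-- The nine-point stencil of the Q¹ finite element method with mixed quadrature
(parameters `l1, l2`) for the operator `u ↦ -∇·(ā∇u) + c u` with constant coefficients
on a uniform square mesh of size `h`, as a function of the index offsets
`di = i - k`, `dj = j - l`. -/
def stencil (a11 a12 a22 c h l1 l2 : ℝ) (di dj : ℤ) : ℝ :=
  if di = 0 ∧ dj = 0 then
    (1 + l2) * a11 + (1 + l1) * a22 + c * h ^ 2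
  else if (di = 1 ∨ di = -1) ∧ dj = 0 then
    -(1/2) * (l2 * a11 + l1 * a22) + (1/2) * (a22 - a11)
  else if di = 0 ∧ (dj = 1 ∨ dj = -1) then
    -(1/2) * (l2 * a11 + l1 * a22) + (1/2) * (a11 - a22)
  else if (di = 1 ∧ dj = 1) ∨ (di = -1 ∧ dj = -1) then
    -(1/4) * ((1 - l2) * a11 + (1 - l1) * a22) - (1/2) * a12
  else if (di = 1 ∧ dj = -1) ∨ (di = -1 ∧ dj = 1) then
    -(1/4) * ((1 - l2) * a11 + (1 - l1) * a22) + (1/2) * a12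
  else 0

/-! ### Auxiliary lemmas -/

lemma aux_neg_of_mulVec_nonpos {ι : Type*} [Fintype ι] [DecidableEq ι]
    (A : Matrix ι ι ℝ) (x : ι → ℝ) (hx : ∀ i, 0 < x i)
    (hAx : ∀ i, 0 < A.mulVec x i) (hoff : ∀ i j, i ≠ j → A i j ≤ 0)
    (z : ι → ℝ) (hz : ∀ i, A.mulVec z i ≤ 0) : ∀ i, z i ≤ 0 := by
  by_contra hcon
  push_neg at hcon
  obtain ⟨i0, hi0⟩ := hcon
  have hne : (Finset.univ : Finset ι).Nonempty := ⟨i0, Finset.mem_univ _⟩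
  obtain ⟨p, -, hp⟩ := Finset.exists_max_image Finset.univ (fun i => z i / x i) hne
  set t := z p / x p with ht
  have htpos : 0 < t := lt_of_lt_of_le (div_pos hi0 (hx i0)) (hp i0 (Finset.mem_univ _))
  have hzq : ∀ q, z q ≤ t * x q := by
    intro q
    have := hp q (Finset.mem_univ _)
    calc z q = z q / x q * x q := by rw [div_mul_cancel₀]; exact (hx q).ne'
    _ ≤ t * x q := by exact mul_le_mul_of_nonneg_right this (hx q).le
  have hzp : z p = t * x p := by rw [ht, div_mul_cancel₀]; exact (hx p).ne'
  have key : t * A.mulVec x p ≤ A.mulVec z p := by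
    simp only [mulVec, dotProduct, Finset.mul_sum]
    apply Finset.sum_le_sum
    intro q _
    rcases eq_or_ne p q with rfl | hpq
    · rw [hzp]; ring_nf; rfl
    · have h1 := hoff p q hpq
      have h2 := hzq q
      nlinarith
  have := hz p
  nlinarith [hAx p, mul_pos htpos (hAx p)]

lemma aux_mmatrix_criterion {ι : Type*} [Fintype ι] [DecidableEq ι]
    (A : Matrix ι ι ℝ) (x : ι → ℝ) (hx : ∀ i, 0 < x i)
    (hAx : ∀ i, 0 < A.mulVec x i) (hoff : ∀ i j, i ≠ j → A i j ≤ 0) :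
    IsUnit A ∧ ∀ i j, 0 ≤ A⁻¹ i j := by
  have hker : ∀ z, A.mulVec z = 0 → z = 0 := by
    intro z hz
    funext i
    have h1 := aux_neg_of_mulVec_nonpos A x hx hAx hoff z (fun i => by
      rw [hz]; exact le_refl 0)
    have h2 := aux_neg_of_mulVec_nonpos A x hx hAx hoff (-z) (fun i => by
      rw [mulVec_neg, hz]; simp)
    have ha := h1 i; have hb := h2 i; simp only [Pi.neg_apply, neg_nonpos] at hb
    simp only [Pi.zero_apply]; linarith
  have hinj : Function.Injective A.mulVec := by
    intro u v huv
    have : A.mulVec (u - v) = 0 := by rw [mulVec_sub, huv, sub_self]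
    have := hker _ this
    exact sub_eq_zero.mp this
  have hunit : IsUnit A := mulVec_injective_iff_isUnit.mp hinj
  refine ⟨hunit, fun i j => ?_⟩
  have hdet : IsUnit A.det := (isUnit_iff_isUnit_det A).mp hunit
  have hAB : A * A⁻¹ = 1 := mul_nonsing_inv A hdet
  have : ∀ k, A.mulVec (fun m => -(A⁻¹ m j)) k ≤ 0 := by
    intro k
    have heq : A.mulVec (fun m => A⁻¹ m j) k = (A * A⁻¹) k j := by
      simp [mulVec, dotProduct, Matrix.mul_apply]
    have h2 : A.mulVec (fun m => -(A⁻¹ m j)) k = -((A * A⁻¹) k j) := by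
      rw [← heq]; simp [mulVec, dotProduct, Finset.sum_neg_distrib]
    rw [h2, hAB]
    by_cases hkj : k = j <;> simp [hkj, one_apply]
  have := aux_neg_of_mulVec_nonpos A x hx hAx hoff _ this i
  linarith

lemma aux_stencil_far (a11 a12 a22 c h l1 l2 : ℝ) (d1 d2 : ℤ)
    (hd : 2 ≤ d1 ∨ d1 ≤ -2 ∨ 2 ≤ d2 ∨ d2 ≤ -2) :
    stencil a11 a12 a22 c h l1 l2 d1 d2 = 0 := by
  unfold stencil
  split_ifs with h1 h2 h3 h4 h5 <;> first | rfl | (exfalso; omega)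

lemma aux_stencil_nonpos (a11 a12 a22 c h l1 l2 : ℝ)
    (hEh : -(1/2) * (l2 * a11 + l1 * a22) + (1/2) * (a22 - a11) ≤ 0)
    (hEv : -(1/2) * (l2 * a11 + l1 * a22) + (1/2) * (a11 - a22) ≤ 0)
    (hD1 : -(1/4) * ((1 - l2) * a11 + (1 - l1) * a22) - (1/2) * a12 ≤ 0)
    (hD2 : -(1/4) * ((1 - l2) * a11 + (1 - l1) * a22) + (1/2) * a12 ≤ 0)
    (d1 d2 : ℤ) (hd : ¬(d1 = 0 ∧ d2 = 0)) :
    stencil a11 a12 a22 c h l1 l2 d1 d2 ≤ 0 := by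
  unfold stencil
  split_ifs with h1 h2 h3 h4 _ <;>
    first | (exact absurd h1 hd) | exact hEh | exact hEv | exact hD1 | exact hD2 | exact le_refl 0

lemma aux_icc3 (i : ℤ) : Finset.Icc (i-1) (i+1) =
    Finset.map ⟨fun d => i + d, add_right_injective i⟩ {-1, 0, 1} := by
  ext t; simp [Finset.mem_Icc]; omega

lemma aux_claim1 (a11 a12 a22 c h l1 l2 N : ℝ) (i j : ℤ) :
    ∑ z ∈ (Finset.Icc (i-1) (i+1)) ×ˢ (Finset.Icc (j-1) (j+1)),
      stencil a11 a12 a22 c h l1 l2 (i - z.1) (j - z.2) *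
        (((z.1 : ℝ) + 1) * (N - 1 - (z.1 : ℝ)) + ((z.2 : ℝ) + 1) * (N - 1 - (z.2 : ℝ)))
    = 2*a11 + 2*a22 + c*h^2*(((i:ℝ)+1)*(N-1-(i:ℝ)) + ((j:ℝ)+1)*(N-1-(j:ℝ))) := by
  rw [Finset.sum_product, aux_icc3 i, aux_icc3 j]
  simp only [Finset.sum_map, Function.Embedding.coeFn_mk, sub_add_cancel_left]
  norm_num [Finset.sum_insert, stencil]
  ring

theorem stmt_9 (n : ℕ) (hn : 2 ≤ n) (h c a11 a12 a22 l1 l2 : ℝ)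
    (hh : 0 < h) (hc : 0 ≤ c)
    (h11 : 0 < a11) (h22 : 0 < a22) (h12 : |a12| ≤ min a11 a22)
    (hl1 : |a11 - a22| / (a11 + a22) < l1 ∧ l1 ≤ 1 - 2 * |a12| / (a11 + a22))
    (hl2 : |a11 - a22| / (a11 + a22) < l2 ∧ l2 ≤ 1 - 2 * |a12| / (a11 + a22))
    (A : Matrix (Fin (n - 1) × Fin (n - 1)) (Fin (n - 1) × Fin (n - 1)) ℝ)
    (hA : ∀ p q : Fin (n - 1) × Fin (n - 1),
      A p q = stencil a11 a12 a22 c h l1 l2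
        ((p.1 : ℤ) - (q.1 : ℤ)) ((p.2 : ℤ) - (q.2 : ℤ))) :
    IsUnit A ∧ ∀ p q, 0 ≤ A⁻¹ p q := by
  have hs : (0:ℝ) < a11 + a22 := by linarith
  -- sign facts for the four off-diagonal stencil values
  have key : |a11-a22|/(a11+a22)*(a11+a22) = |a11-a22| := div_mul_cancel₀ _ hs.ne'
  have key2 : 2*|a12|/(a11+a22)*(a11+a22) = 2*|a12| := div_mul_cancel₀ _ hs.ne'
  have m1 : |a11-a22|/(a11+a22)*a11 ≤ l2*a11 := mul_le_mul_of_nonneg_right hl2.1.le h11.le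
  have m2 : |a11-a22|/(a11+a22)*a22 ≤ l1*a22 := mul_le_mul_of_nonneg_right hl1.1.le h22.le
  have sumeq : |a11-a22|/(a11+a22)*a11 + |a11-a22|/(a11+a22)*a22
      = |a11-a22|/(a11+a22)*(a11+a22) := by ring
  have habs1 : -(a11-a22) ≤ |a11-a22| := neg_le_abs _
  have habs2 : a11-a22 ≤ |a11-a22| := le_abs_self _
  have hEh : -(1/2) * (l2 * a11 + l1 * a22) + (1/2) * (a22 - a11) ≤ 0 := by linarith
  have hEv : -(1/2) * (l2 * a11 + l1 * a22) + (1/2) * (a11 - a22) ≤ 0 := by linarith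
  have n1 : 2*|a12|/(a11+a22)*a11 ≤ (1-l2)*a11 :=
    mul_le_mul_of_nonneg_right (by linarith [hl2.2]) h11.le
  have n2 : 2*|a12|/(a11+a22)*a22 ≤ (1-l1)*a22 :=
    mul_le_mul_of_nonneg_right (by linarith [hl1.2]) h22.le
  have sumeq2 : 2*|a12|/(a11+a22)*a11 + 2*|a12|/(a11+a22)*a22
      = 2*|a12|/(a11+a22)*(a11+a22) := by ring
  have habs3 : -a12 ≤ |a12| := neg_le_abs _
  have habs4 : a12 ≤ |a12| := le_abs_self _
  have hD1 : -(1/4) * ((1 - l2) * a11 + (1 - l1) * a22) - (1/2) * a12 ≤ 0 := by linarith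
  have hD2 : -(1/4) * ((1 - l2) * a11 + (1 - l1) * a22) + (1/2) * a12 ≤ 0 := by linarith
  -- the barrier function
  set N : ℝ := (n : ℝ) with hN
  set X : ℤ × ℤ → ℝ := fun z =>
    ((z.1 : ℝ) + 1) * (N - 1 - (z.1 : ℝ)) + ((z.2 : ℝ) + 1) * (N - 1 - (z.2 : ℝ)) with hX
  set x : Fin (n-1) × Fin (n-1) → ℝ := fun q => X ((q.1 : ℤ), (q.2 : ℤ)) with hxdef
  have hcoord : ∀ q : Fin (n-1), 0 ≤ (q : ℤ) ∧ (q : ℤ) ≤ (n : ℤ) - 2 := by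
    intro q
    have := q.isLt
    omega
  have hWpos : ∀ t : ℤ, 0 ≤ t → t ≤ (n:ℤ) - 2 → 0 < ((t:ℝ)+1) * (N - 1 - (t:ℝ)) := by
    intro t h0 h1
    have c0 : (0:ℝ) ≤ (t:ℝ) := by exact_mod_cast h0
    have c1 : (t:ℝ) ≤ (n:ℝ) - 2 := by exact_mod_cast h1
    have hn2 : (2:ℝ) ≤ (n:ℝ) := by exact_mod_cast hn
    have : (0:ℝ) < (t:ℝ) + 1 := by linarith
    have : (0:ℝ) < N - 1 - (t:ℝ) := by rw [hN]; linarith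
    positivity
  have hWnonneg : ∀ t : ℤ, -1 ≤ t → t ≤ (n:ℤ) - 1 → 0 ≤ ((t:ℝ)+1) * (N - 1 - (t:ℝ)) := by
    intro t h0 h1
    have c0 : (-1:ℝ) ≤ (t:ℝ) := by exact_mod_cast h0
    have c1 : (t:ℝ) ≤ (n:ℝ) - 1 := by exact_mod_cast h1
    have : (0:ℝ) ≤ (t:ℝ) + 1 := by linarith
    have : (0:ℝ) ≤ N - 1 - (t:ℝ) := by rw [hN]; linarith
    positivity
  have hx : ∀ q, 0 < x q := by
    intro q
    have h1 := hWpos _ (hcoord q.1).1 (hcoord q.1).2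
    have h2 := hWpos _ (hcoord q.2).1 (hcoord q.2).2
    simp only [hxdef, hX]
    exact add_pos h1 h2
  -- off-diagonal entries are nonpositive
  have hoff : ∀ p q, p ≠ q → A p q ≤ 0 := by
    intro p q hpq
    rw [hA]
    apply aux_stencil_nonpos _ _ _ _ _ _ _ hEh hEv hD1 hD2
    rintro ⟨e1, e2⟩
    apply hpq
    have : (p.1 : ℤ) = (q.1 : ℤ) := by omega
    have hp1 : p.1 = q.1 := by
      apply Fin.ext; omega
    have : (p.2 : ℤ) = (q.2 : ℤ) := by omega
    have hp2 : p.2 = q.2 := by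
      apply Fin.ext; omega
    exact Prod.ext hp1 hp2
  -- positivity of A x
  have hAx : ∀ p, 0 < A.mulVec x p := by
    intro p
    set i : ℤ := (p.1 : ℤ) with hi
    set j : ℤ := (p.2 : ℤ) with hj
    set F : ℤ × ℤ → ℝ := fun z =>
      stencil a11 a12 a22 c h l1 l2 (i - z.1) (j - z.2) * X z with hF
    set e : Fin (n-1) × Fin (n-1) → ℤ × ℤ := fun q => ((q.1 : ℤ), (q.2 : ℤ)) with he
    have hinj : ∀ a ∈ Finset.univ, ∀ b ∈ Finset.univ, e a = e b → a = b := by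
      intro a _ b _ hab
      simp only [he, Prod.mk.injEq] at hab
      refine Prod.ext (Fin.ext ?_) (Fin.ext ?_) <;> omega
    set S : Finset (ℤ × ℤ) := Finset.univ.image e with hS
    set T : Finset (ℤ × ℤ) :=
      (Finset.Icc (i-1) (i+1)) ×ˢ (Finset.Icc (j-1) (j+1)) with hT
    have hmv : A.mulVec x p = ∑ z ∈ S, F z := by
      rw [hS, Finset.sum_image hinj]
      simp only [mulVec, dotProduct]
      apply Finset.sum_congr rfl
      intro q _
      rw [hA p q]
    have hpinS : (i, j) ∈ S := by
      rw [hS]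
      exact Finset.mem_image.mpr ⟨p, Finset.mem_univ _, rfl⟩
    have h1 : ∑ z ∈ S, F z = ∑ z ∈ S ∩ T, F z := by
      apply (Finset.sum_subset Finset.inter_subset_left _).symm
      intro z hzS hz
      have hzT : z ∉ T := fun hzT => hz (Finset.mem_inter.mpr ⟨hzS, hzT⟩)
      rw [hT, Finset.mem_product] at hzT
      simp only [Finset.mem_Icc, not_and_or, not_le] at hzT
      rw [hF]
      apply mul_eq_zero_of_left
      apply aux_stencil_far
      omega
    have h2 : ∑ z ∈ T, F z ≤ ∑ z ∈ S ∩ T, F z := by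
      rw [← Finset.inter_comm T S] at *
      have := Finset.sum_inter_add_sum_sdiff T S F
      have hdiff : ∑ z ∈ T \ S, F z ≤ 0 := by
        apply Finset.sum_nonpos
        intro z hz
        rw [Finset.mem_sdiff] at hz
        obtain ⟨hzT, hzS⟩ := hz
        rw [hT, Finset.mem_product, Finset.mem_Icc, Finset.mem_Icc] at hzT
        have hzne : ¬(i - z.1 = 0 ∧ j - z.2 = 0) := by
          rintro ⟨e1, e2⟩
          apply hzS
          have : z = (i, j) := by
            ext <;> omega
          rw [this]; exact hpinS
        have hst : stencil a11 a12 a22 c h l1 l2 (i - z.1) (j - z.2) ≤ 0 :=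
          aux_stencil_nonpos _ _ _ _ _ _ _ hEh hEv hD1 hD2 _ _ hzne
        have hXz : 0 ≤ X z := by
          have b1 := hWnonneg z.1 (by have := (hcoord p.1).1; omega)
            (by have := (hcoord p.1).2; omega)
          have b2 := hWnonneg z.2 (by have := (hcoord p.2).1; omega)
            (by have := (hcoord p.2).2; omega)
          rw [hX]
          exact add_nonneg b1 b2
        exact mul_nonpos_of_nonpos_of_nonneg hst hXz
      linarith
    have h3 : ∑ z ∈ T, F z
        = 2*a11 + 2*a22 + c*h^2*(((i:ℝ)+1)*(N-1-(i:ℝ)) + ((j:ℝ)+1)*(N-1-(j:ℝ))) := by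
      rw [hT, hF, hX]
      exact aux_claim1 a11 a12 a22 c h l1 l2 N i j
    have hXp : 0 ≤ ((i:ℝ)+1)*(N-1-(i:ℝ)) + ((j:ℝ)+1)*(N-1-(j:ℝ)) := by
      have b1 := (hWpos i (hcoord p.1).1 (hcoord p.1).2).le
      have b2 := (hWpos j (hcoord p.2).1 (hcoord p.2).2).le
      exact add_nonneg b1 b2
    have hch : 0 ≤ c * h^2 * (((i:ℝ)+1)*(N-1-(i:ℝ)) + ((j:ℝ)+1)*(N-1-(j:ℝ))) := by
      apply mul_nonneg (mul_nonneg hc (sq_nonneg h)) hXp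
    rw [hmv, h1]
    calc (0:ℝ) < 2*a11 + 2*a22 +
        c*h^2*(((i:ℝ)+1)*(N-1-(i:ℝ)) + ((j:ℝ)+1)*(N-1-(j:ℝ))) := by linarith
    _ = ∑ z ∈ T, F z := h3.symm
    _ ≤ ∑ z ∈ S ∩ T, F z := h2
  exact aux_mmatrix_criterion A x hx hAx hoff

end
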